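/- For every j ∈ {1/2, 1, 3/2, …}, the matrix R^{(1/2,j)}(q^{−j−1/2}) has rank 2j and admits the factorization R^{(1/2,j)}(q^{−j−1/2}) = 𝓔̄^{(j−1/2)}·𝓗̄^{(j−1/2)}·𝓕̄^{(j−1/2)}, where 𝓗̄^{(j−1/2)} is the diagonal (2j)×(2j) matrix with entries 𝓗̄_n = (∏_{k=0}^{2j−2} c(q^{−k−1}))·(q−q⁻¹)·B_{j,−j+n}/(𝓔̄^{(j−1/2)}_{n+2j+1,n}·𝓕̄^{(j−1/2)}_{n,n+1}) for n = 1,…,2j. -/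

import Mathlib

noncomputable section
open Matrix
open scoped Kronecker

/-- The q-number `[n]_q`. -/
def qint (q : ℂ) (n : ℤ) : ℂ := (q ^ n - q ^ (-n)) / (q - q⁻¹)

section CMat
variable (q t : ℂ) (s : ℕ → ℕ → ℂ)

/-- Diagonal entries `𝓔_{1+n,1+n}` of the intertwiner `𝓔^{(j+1/2)}` (here `N = 2j`, and
`s a b` is the fixed choice of square root of `[a]_q [b]_q`, so that
`B_{j,m} = s (j+m) (j-m+1)` and `A_{j,m} = B_{j,m+1} = s (j+m+1) (j-m)`). -/
def Ediag (N k : ℕ) : ℂ := ∏ p ∈ Finset.range k, s (N - p) (p + 1) / s (N + 1 - p) (p + 1)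

/-- Lower-block entries `𝓔_{2j+2+k,2+k}` of the intertwiner `𝓔^{(j+1/2)}`. -/
def Eoff (N k : ℕ) : ℂ := qint q ((k : ℤ) + 1) * Ediag s N k / s (N + 1 - k) (k + 1)

/-- The intertwiner `𝓔^{(j+1/2)} : ℂ^{2j+2} → ℂ²⊗ℂ^{2j+1}`, `N = 2j`; rows are indexed by
`(ε,k)` with `ε ∈ {↑,↓}` and `k = j - m`, columns by `|j+1/2, j+1/2⟩, …, |j+1/2, -j-1/2⟩`. -/
def Emat (N : ℕ) : Matrix (Fin 2 × Fin (N + 1)) (Fin (N + 2)) ℂ := fun r c =>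
  if r.1 = 0 then (if (c : ℕ) = (r.2 : ℕ) then Ediag s N (r.2 : ℕ) else 0)
  else (if (c : ℕ) = (r.2 : ℕ) + 1 then Eoff q s N (r.2 : ℕ) else 0)

/-- The entries `𝓕_{n,n+2j}` of the pseudo-inverse `𝓕^{(j+1/2)}` (here `k = n-1`). -/
def Foff (N k : ℕ) : ℂ := Eoff q s N (k - 1) / ((Ediag s N k) ^ 2 + (Eoff q s N (k - 1)) ^ 2)

/-- The pseudo-inverse `𝓕^{(j+1/2)} : ℂ²⊗ℂ^{2j+1} → ℂ^{2j+2}`, `N = 2j`. -/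
def Fmat (N : ℕ) : Matrix (Fin (N + 2)) (Fin 2 × Fin (N + 1)) ℂ := fun r c =>
  if (r : ℕ) = 0 then (if c.1 = 0 ∧ (c.2 : ℕ) = 0 then 1 else 0)
  else if (r : ℕ) = N + 1 then (if c.1 = 1 ∧ (c.2 : ℕ) = N then (Eoff q s N N)⁻¹ else 0)
  else if c.1 = 0 ∧ (c.2 : ℕ) = (r : ℕ) then
    (1 - Foff q s N (r : ℕ) * Eoff q s N ((r : ℕ) - 1)) / Ediag s N (r : ℕ)
  else if c.1 = 1 ∧ (c.2 : ℕ) = (r : ℕ) - 1 then Foff q s N (r : ℕ)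
  else 0

/-- Upper-block entries `𝓔̄_{2+n,1+n}` of the intertwiner `𝓔̄^{(j-1/2)}` (here `N = 2j`). -/
def Ebdiag (N n : ℕ) : ℂ := ∏ p ∈ Finset.range n, s (N - 1 - p) (p + 2) / s (N - 1 - p) (p + 1)

/-- Lower-block entries `𝓔̄_{2j+2+m,1+m}` of `𝓔̄^{(j-1/2)}`. -/
def Eboff (N k : ℕ) : ℂ := qint q ((k : ℤ) - (N : ℤ)) * Ebdiag s N k / s (N - k) (k + 1)

/-- The intertwiner `𝓔̄^{(j-1/2)} : ℂ^{2j} → ℂ²⊗ℂ^{2j+1}`, `N = 2j`. -/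
def Ebar (N : ℕ) : Matrix (Fin 2 × Fin (N + 1)) (Fin N) ℂ := fun r c =>
  if r.1 = 0 then (if (r.2 : ℕ) = (c : ℕ) + 1 then Ebdiag s N (c : ℕ) else 0)
  else (if (r.2 : ℕ) = (c : ℕ) then Eboff q s N (c : ℕ) else 0)

/-- The entries `𝓕̄_{n,n+2j+1}` of the pseudo-inverse `𝓕̄^{(j-1/2)}` (here `k = n-1`). -/
def Fboff (N k : ℕ) : ℂ := Eboff q s N k / ((Ebdiag s N k) ^ 2 + (Eboff q s N k) ^ 2)

/-- The entries `𝓕̄_{n,n+1}` of `𝓕̄^{(j-1/2)}` (here `k = n-1`). -/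
def Fbdiag (N k : ℕ) : ℂ := (1 - Fboff q s N k * Eboff q s N k) / Ebdiag s N k

/-- The pseudo-inverse `𝓕̄^{(j-1/2)} : ℂ²⊗ℂ^{2j+1} → ℂ^{2j}`, `N = 2j`. -/
def Fbar (N : ℕ) : Matrix (Fin N) (Fin 2 × Fin (N + 1)) ℂ := fun r c =>
  if c.1 = 0 then (if (c.2 : ℕ) = (r : ℕ) + 1 then Fbdiag q s N (r : ℕ) else 0)
  else (if (c.2 : ℕ) = (r : ℕ) then Fboff q s N (r : ℕ) else 0)

end CMat

section PiMat
variable (q t : ℂ) (s : ℕ → ℕ → ℂ)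

/-- The matrix `π^j(E)` on `ℂ^{2j+1}` in the basis `|j,j⟩, …, |j,-j⟩` (here `N = 2j`):
`π^j(E)|j,m⟩ = A_{j,m}|j,m+1⟩` with `A_{j,m} = s (j-m) (j+m+1)`. -/
def piE (N : ℕ) : Matrix (Fin (N + 1)) (Fin (N + 1)) ℂ := fun i i' =>
  if (i' : ℕ) = (i : ℕ) + 1 then s ((i : ℕ) + 1) (N - (i : ℕ)) else 0

/-- The matrix `π^j(F)`: `π^j(F)|j,m⟩ = B_{j,m}|j,m-1⟩` with `B_{j,m} = s (j+m) (j-m+1)`. -/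
def piF (N : ℕ) : Matrix (Fin (N + 1)) (Fin (N + 1)) ℂ := fun i i' =>
  if (i : ℕ) = (i' : ℕ) + 1 then s (N - (i' : ℕ)) ((i' : ℕ) + 1) else 0

/-- The matrix `π^j(K^{ε/2}) = diag(q^{εm})`, written with `q^{1/2} = t`. -/
def piK (N : ℕ) (ε : ℤ) : Matrix (Fin (N + 1)) (Fin (N + 1)) ℂ :=
  Matrix.diagonal fun k => t ^ (ε * ((N : ℤ) - 2 * ((k : ℕ) : ℤ)))

/-- Diagonal exponents of `(I + σ_z ⊗ π^j(H))/2`, as powers of `t = q^{1/2}`. -/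
def Rexp (N : ℕ) (p : Fin 2 × Fin (N + 1)) : ℤ :=
  1 + (if p.1 = 0 then 1 else -1) * ((N : ℤ) - 2 * ((p.2 : ℕ) : ℤ))

/-- The Pauli matrix `σ₊`. -/
def sigp : Matrix (Fin 2) (Fin 2) ℂ := fun i j => if i = 0 ∧ j = 1 then 1 else 0

/-- The Pauli matrix `σ₋`. -/
def sigm : Matrix (Fin 2) (Fin 2) ℂ := fun i j => if i = 1 ∧ j = 0 then 1 else 0

/-- The explicit R-matrix `R^{(1/2,j)}(u)`, with `N = 2j` and `t = q^{1/2}`: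
`R^{(1/2,j)}(u) = (∏_{k=0}^{2j-2} c(uq^{j-1/2-k})) ((q-q⁻¹)(σ₊⊗π^j(F) + σ₋⊗π^j(E))
  + u q^{(I+σ_z⊗π^j(H))/2} - u⁻¹ q^{-(I+σ_z⊗π^j(H))/2})`. -/
def Rhalf (N : ℕ) (u : ℂ) : Matrix (Fin 2 × Fin (N + 1)) (Fin 2 × Fin (N + 1)) ℂ :=
  (∏ k ∈ Finset.range (N - 1),
      (u * t ^ ((N : ℤ) - 1 - 2 * (k : ℤ)) - u⁻¹ * t ^ (-((N : ℤ) - 1 - 2 * (k : ℤ))))) •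
    ((q - q⁻¹) • (sigp ⊗ₖ piF s N + sigm ⊗ₖ piE s N) +
      Matrix.diagonal fun p => u * t ^ Rexp N p - u⁻¹ * t ^ (-Rexp N p))

end PiMat

/-- The diagonal entries of `𝓗̄^{(j-1/2)}`, `N = 2j`: for `n = 1, …, 2j`,
`𝓗̄_n = (∏_{k=0}^{2j-2} c(q^{-k-1}))(q-q⁻¹) B_{j,-j+n}/(𝓔̄^{(j-1/2)}_{n+2j+1,n} 𝓕̄^{(j-1/2)}_{n,n+1})`. -/
def Hbdiag (q : ℂ) (s : ℕ → ℕ → ℂ) (N : ℕ) (r : Fin N) : ℂ :=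
  (∏ k ∈ Finset.range (N - 1), (q ^ (-((k : ℤ) + 1)) - q ^ ((k : ℤ) + 1))) *
    ((q - q⁻¹) * s ((r : ℕ) + 1) (N - (r : ℕ)) /
      (Eboff q s N (r : ℕ) * Fbdiag q s N (r : ℕ)))

namespace S8
variable {q : ℂ} {s : ℕ → ℕ → ℂ}

lemma hzpow (hq0 : q ≠ 0) (hqru : ∀ n : ℕ, n ≠ 0 → q ^ n ≠ 1) :
    ∀ m : ℤ, m ≠ 0 → q ^ m ≠ 1 := by
  intro m hm h
  obtain ⟨n, rfl | rfl⟩ := m.eq_nat_or_neg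
  · exact hqru n (by exact_mod_cast hm) (by rwa [zpow_natCast] at h)
  · rw [_root_.zpow_neg, inv_eq_one, zpow_natCast] at h
    exact hqru n (by simpa using hm) h

lemma hqq (hq0 : q ≠ 0) (hqru : ∀ n : ℕ, n ≠ 0 → q ^ n ≠ 1) : q - q⁻¹ ≠ 0 := by
  refine sub_ne_zero.mpr fun h => hqru 2 two_ne_zero ?_
  calc q ^ 2 = q * q := sq q
  _ = q * q⁻¹ := by rw [← h]
  _ = 1 := mul_inv_cancel₀ hq0

lemma qint_ne (hq0 : q ≠ 0) (hqru : ∀ n : ℕ, n ≠ 0 → q ^ n ≠ 1)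
    {n : ℤ} (hn : n ≠ 0) : qint q n ≠ 0 := by
  refine div_ne_zero (sub_ne_zero.mpr fun h => ?_) (hqq hq0 hqru)
  refine hzpow hq0 hqru (2 * n) (by omega) ?_
  calc q ^ (2 * n) = q ^ n * q ^ n := by rw [two_mul, zpow_add₀ hq0]
  _ = q ^ (-n) * q ^ n := by nth_rewrite 1 [h]; rfl
  _ = 1 := by rw [← zpow_add₀ hq0]; simp

lemma qint_neg (n : ℤ) : qint q (-n) = -qint q n := by
  simp only [qint, neg_neg, neg_div]
  ring

lemma qint_one (hq0 : q ≠ 0) (hqru : ∀ n : ℕ, n ≠ 0 → q ^ n ≠ 1) : qint q 1 = 1 := by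
  simp only [qint, zpow_one, _root_.zpow_neg_one]
  exact div_self (hqq hq0 hqru)

lemma qq_qint (hq0 : q ≠ 0) (hqru : ∀ n : ℕ, n ≠ 0 → q ^ n ≠ 1) (n : ℤ) :
    (q - q⁻¹) * qint q n = q ^ n - q ^ (-n) := by
  rw [qint, mul_div_cancel₀ _ (hqq hq0 hqru)]

lemma qint_sum_ne (hq0 : q ≠ 0) (hqru : ∀ n : ℕ, n ≠ 0 → q ^ n ≠ 1)
    {a b : ℤ} (ha : 0 < a) (hb : 0 < b) : qint q a + qint q b ≠ 0 := by
  intro h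
  have haz : q ^ a ≠ 0 := zpow_ne_zero a hq0
  have hbz : q ^ b ≠ 0 := zpow_ne_zero b hq0
  have hnum : q ^ a - q ^ (-a) + (q ^ b - q ^ (-b)) = 0 := by
    have := congrArg (· * (q - q⁻¹)) h
    simpa [qint, div_mul_cancel₀, hqq hq0 hqru, add_mul] using this
  have hfac : (q ^ (a + b) - 1) * (q ^ a + q ^ b) = 0 := by
    have : (q ^ (a + b) - 1) * (q ^ a + q ^ b) =
        (q ^ a - q ^ (-a) + (q ^ b - q ^ (-b))) * (q ^ a * q ^ b) := by
      rw [zpow_add₀ hq0, _root_.zpow_neg, _root_.zpow_neg]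
      field_simp
      ring
    rw [this, hnum, zero_mul]
  rcases mul_eq_zero.mp hfac with h1 | h2
  · exact hzpow hq0 hqru (a + b) (by omega) (by linear_combination h1)
  · by_cases hab : a = b
    · subst hab
      exact haz (by linear_combination h2 / 2)
    · refine hzpow hq0 hqru (2 * (a - b)) (by omega) ?_
      have hqa : q ^ a = -q ^ b := by linear_combination h2
      rw [show 2 * (a - b) = a + a - b - b by ring, zpow_sub₀ hq0, zpow_sub₀ hq0,
        zpow_add₀ hq0, hqa]
      field_simp

end S8
namespace S8
variable {q : ℂ} {s : ℕ → ℕ → ℂ}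

section
variable (hq0 : q ≠ 0) (hqru : ∀ n : ℕ, n ≠ 0 → q ^ n ≠ 1)
  (hs : ∀ a b : ℕ, s a b ^ 2 = qint q (a : ℤ) * qint q (b : ℤ))
include hq0 hqru hs

lemma s_ne {a b : ℕ} (ha : a ≠ 0) (hb : b ≠ 0) : s a b ≠ 0 := by
  intro h
  have h2 := hs a b
  rw [h] at h2
  exact mul_ne_zero (qint_ne hq0 hqru (Int.natCast_ne_zero.mpr ha))
    (qint_ne hq0 hqru (Int.natCast_ne_zero.mpr hb)) (by rw [← h2]; ring)

lemma Ebdiag_sq {N n : ℕ} (hn : n < N) :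
    Ebdiag s N n ^ 2 = qint q ((n : ℤ) + 1) := by
  induction n with
  | zero => simp [Ebdiag, qint_one hq0 hqru]
  | succ m ih =>
    have hm : m < N := by omega
    have h1 : (N : ℤ) - 1 - m ≠ 0 := by omega
    have hcast : ((N - 1 - m : ℕ) : ℤ) = (N : ℤ) - 1 - m := by omega
    have hq1 : qint q ((N : ℤ) - 1 - m) ≠ 0 := qint_ne hq0 hqru h1
    have hq2 : qint q ((m : ℤ) + 1) ≠ 0 := qint_ne hq0 hqru (by omega)
    rw [Ebdiag, Finset.prod_range_succ, ← Ebdiag, mul_pow, div_pow, hs, hs, ih hm, hcast]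
    have e1 : ((m : ℤ) + 2) = ((m + 2 : ℕ) : ℤ) := by push_cast; ring
    have e2 : ((m : ℤ) + 1) = ((m + 1 : ℕ) : ℤ) := by push_cast; ring
    rw [show (((m : ℕ) + 1 : ℕ) : ℤ) + 1 = (m : ℤ) + 2 by push_cast; ring, e1, e2]
    field_simp
    exact mul_div_cancel_left₀ _ (show qint q ((m + 1 : ℕ) : ℤ) ≠ 0 by rw [← e2]; exact hq2)

lemma Ebdiag_ne {N n : ℕ} (hn : n < N) : Ebdiag s N n ≠ 0 := by
  intro h
  have := Ebdiag_sq hq0 hqru hs hn (s := s)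
  rw [h] at this
  exact qint_ne hq0 hqru (n := (n : ℤ) + 1) (by omega) (by rw [← this]; ring)

lemma Eboff_sq {N k : ℕ} (hk : k < N) :
    Eboff q s N k ^ 2 = qint q ((N : ℤ) - k) := by
  have hcast : ((N - k : ℕ) : ℤ) = (N : ℤ) - k := by omega
  have hcast2 : (((k : ℕ) + 1 : ℕ) : ℤ) = (k : ℤ) + 1 := by push_cast; ring
  have hNk : qint q ((N : ℤ) - k) ≠ 0 := qint_ne hq0 hqru (by omega)
  have hk1 : qint q ((k : ℤ) + 1) ≠ 0 := qint_ne hq0 hqru (by omega)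
  rw [Eboff, div_pow, mul_pow, hs, Ebdiag_sq hq0 hqru hs hk, hcast, hcast2,
    show (k : ℤ) - N = -((N : ℤ) - k) by ring, qint_neg, neg_sq]
  field_simp

lemma Eboff_ne {N k : ℕ} (hk : k < N) : Eboff q s N k ≠ 0 := by
  intro h
  have := Eboff_sq hq0 hqru hs hk (s := s)
  rw [h] at this
  exact qint_ne hq0 hqru (n := (N : ℤ) - k) (by omega) (by rw [← this]; ring)

lemma EF_sum {N k : ℕ} (hk : k < N) :
    Ebdiag s N k ^ 2 + Eboff q s N k ^ 2 = qint q ((k : ℤ) + 1) + qint q ((N : ℤ) - k) := by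
  rw [Ebdiag_sq hq0 hqru hs hk, Eboff_sq hq0 hqru hs hk]

omit hs in
lemma S_ne {N k : ℕ} (hk : k < N) :
    qint q ((k : ℤ) + 1) + qint q ((N : ℤ) - k) ≠ 0 :=
  qint_sum_ne hq0 hqru (by omega) (by omega)

lemma Fboff_eq {N k : ℕ} (hk : k < N) :
    Fboff q s N k = Eboff q s N k / (qint q ((k : ℤ) + 1) + qint q ((N : ℤ) - k)) := by
  rw [Fboff, EF_sum hq0 hqru hs hk]

lemma Fbdiag_eq {N k : ℕ} (hk : k < N) :
    Fbdiag q s N k = Ebdiag s N k / (qint q ((k : ℤ) + 1) + qint q ((N : ℤ) - k)) := by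
  have hS := S_ne hq0 hqru hk
  have hE := Ebdiag_ne hq0 hqru hs hk
  have hE2 := Ebdiag_sq hq0 hqru hs hk
  have hO2 := Eboff_sq hq0 hqru hs hk
  rw [Fbdiag, Fboff, EF_sum hq0 hqru hs hk]
  field_simp
  linear_combination (-1 : ℂ) * hE2 +
    (-1 : ℂ) * hO2

lemma Fbdiag_ne {N k : ℕ} (hk : k < N) : Fbdiag q s N k ≠ 0 := by
  rw [Fbdiag_eq hq0 hqru hs hk]
  exact div_ne_zero (Ebdiag_ne hq0 hqru hs hk) (S_ne hq0 hqru hk)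

end
end S8
namespace S8
variable {q : ℂ} {s : ℕ → ℕ → ℂ}

section
variable (hq0 : q ≠ 0) (hqru : ∀ n : ℕ, n ≠ 0 → q ^ n ≠ 1)
  (hs : ∀ a b : ℕ, s a b ^ 2 = qint q (a : ℤ) * qint q (b : ℤ))
  (hssym : ∀ a b : ℕ, s a b = s b a)
include hq0 hqru hs

lemma s2_sq {N k : ℕ} (hk : k < N) :
    s (N - k) (k + 1) ^ 2 = qint q ((N : ℤ) - k) * qint q ((k : ℤ) + 1) := by
  have h1 : ((N - k : ℕ) : ℤ) = (N : ℤ) - k := by omega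
  have h2 : ((k + 1 : ℕ) : ℤ) = (k : ℤ) + 1 := by push_cast; ring
  rw [hs, h1, h2]

omit hq0 hqru hs in
lemma qint_kN {N k : ℕ} : qint q ((k : ℤ) - N) = -qint q ((N : ℤ) - k) := by
  rw [show (k : ℤ) - N = -((N : ℤ) - k) by ring, qint_neg]

include hssym in
lemma key1 {N k : ℕ} (hk : k < N) :
    s (k + 1) (N - k) * Ebdiag s N k = -(qint q ((k : ℤ) + 1)) * Eboff q s N k := by
  have hs2 := s2_sq hq0 hqru hs (s := s) hk
  have hs2n : s (N - k) (k + 1) ≠ 0 := s_ne hq0 hqru hs (by omega) (by omega)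
  rw [hssym (k + 1) (N - k), Eboff]
  have hkN : qint q ((k : ℤ) - N) = -qint q ((N : ℤ) - k) := qint_kN
  field_simp
  linear_combination Ebdiag s N k * hs2 +
    qint q ((k : ℤ) + 1) * Ebdiag s N k * hkN

include hssym in
lemma key2 {N k : ℕ} (hk : k < N) :
    s (k + 1) (N - k) * Eboff q s N k = qint q ((k : ℤ) - N) * Ebdiag s N k := by
  have hs2n : s (N - k) (k + 1) ≠ 0 := s_ne hq0 hqru hs (by omega) (by omega)
  rw [hssym (k + 1) (N - k), Eboff]
  field_simp

include hssym in
lemma coreA {N k : ℕ} (hk : k < N) :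
    Ebdiag s N k * ((q - q⁻¹) * s (k + 1) (N - k) /
        (Eboff q s N k * Fbdiag q s N k)) * Fbdiag q s N k
      = q ^ (-((k : ℤ) + 1)) - q ^ ((k : ℤ) + 1) := by
  have hE := Ebdiag_ne hq0 hqru hs hk
  have hO := Eboff_ne hq0 hqru hs hk
  have hS := S_ne hq0 hqru hk
  calc Ebdiag s N k * ((q - q⁻¹) * s (k + 1) (N - k) /
        (Eboff q s N k * Fbdiag q s N k)) * Fbdiag q s N k
      = (q - q⁻¹) * (s (k + 1) (N - k) * Ebdiag s N k) / Eboff q s N k := by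
        rw [Fbdiag_eq hq0 hqru hs hk]
        field_simp
    _ = (q - q⁻¹) * (-(qint q ((k : ℤ) + 1)) * Eboff q s N k) / Eboff q s N k := by
        rw [key1 hq0 hqru hs hssym hk]
    _ = -((q - q⁻¹) * qint q ((k : ℤ) + 1)) := by field_simp
    _ = q ^ (-((k : ℤ) + 1)) - q ^ ((k : ℤ) + 1) := by
        rw [qq_qint hq0 hqru]; ring

include hssym in
lemma coreB {N k : ℕ} (hk : k < N) :
    Ebdiag s N k * ((q - q⁻¹) * s (k + 1) (N - k) /
        (Eboff q s N k * Fbdiag q s N k)) * Fboff q s N k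
      = (q - q⁻¹) * s (N - k) (k + 1) := by
  have hE := Ebdiag_ne hq0 hqru hs hk
  have hO := Eboff_ne hq0 hqru hs hk
  have hS := S_ne hq0 hqru hk
  rw [hssym (k + 1) (N - k), Fbdiag_eq hq0 hqru hs hk, Fboff_eq hq0 hqru hs hk]
  field_simp

include hssym in
lemma coreC {N k : ℕ} (hk : k < N) :
    Eboff q s N k * ((q - q⁻¹) * s (k + 1) (N - k) /
        (Eboff q s N k * Fbdiag q s N k)) * Fbdiag q s N k
      = (q - q⁻¹) * s (k + 1) (N - k) := by
  have hO := Eboff_ne hq0 hqru hs hk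
  have hFb := Fbdiag_ne hq0 hqru hs hk
  field_simp

include hssym in
lemma coreD {N k : ℕ} (hk : k < N) :
    Eboff q s N k * ((q - q⁻¹) * s (k + 1) (N - k) /
        (Eboff q s N k * Fbdiag q s N k)) * Fboff q s N k
      = q ^ ((k : ℤ) - N) - q ^ ((N : ℤ) - k) := by
  have hE := Ebdiag_ne hq0 hqru hs hk
  have hO := Eboff_ne hq0 hqru hs hk
  have hS := S_ne hq0 hqru hk
  calc Eboff q s N k * ((q - q⁻¹) * s (k + 1) (N - k) /
        (Eboff q s N k * Fbdiag q s N k)) * Fboff q s N k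
      = (q - q⁻¹) * (s (k + 1) (N - k) * Eboff q s N k) / Ebdiag s N k := by
        rw [Fbdiag_eq hq0 hqru hs hk, Fboff_eq hq0 hqru hs hk]
        field_simp
    _ = (q - q⁻¹) * (qint q ((k : ℤ) - N) * Ebdiag s N k) / Ebdiag s N k := by
        rw [key2 hq0 hqru hs hssym hk]
    _ = (q - q⁻¹) * qint q ((k : ℤ) - N) := by field_simp
    _ = q ^ ((k : ℤ) - N) - q ^ ((N : ℤ) - k) := by
        rw [qq_qint hq0 hqru, show -((k : ℤ) - N) = (N : ℤ) - k by ring]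

end
end S8
namespace S8
variable {q : ℂ} {s : ℕ → ℕ → ℂ}

lemma sum_collapse {M : ℕ} (f : Fin M → ℂ) {m : ℕ} (hm : m < M) :
    ∑ r : Fin M, (if (r : ℕ) = m then f r else 0) = f ⟨m, hm⟩ := by
  rw [Finset.sum_eq_single ⟨m, hm⟩]
  · simp
  · intro b _ hb
    exact if_neg fun h => hb (Fin.ext h)
  · intro h
    exact absurd (Finset.mem_univ _) h

lemma pref_ne (hq0 : q ≠ 0) (hqru : ∀ n : ℕ, n ≠ 0 → q ^ n ≠ 1) (N : ℕ) :
    (∏ k ∈ Finset.range (N - 1), (q ^ (-((k : ℤ) + 1)) - q ^ ((k : ℤ) + 1))) ≠ 0 := by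
  refine Finset.prod_ne_zero_iff.mpr fun k _ => sub_ne_zero.mpr fun h => ?_
  refine hzpow hq0 hqru (2 * ((k : ℤ) + 1)) (by omega) ?_
  calc q ^ (2 * ((k : ℤ) + 1)) = q ^ ((k : ℤ) + 1) * q ^ ((k : ℤ) + 1) := by
        rw [two_mul, zpow_add₀ hq0]
    _ = q ^ ((k : ℤ) + 1) * q ^ (-((k : ℤ) + 1)) := by rw [h]
    _ = 1 := by rw [← zpow_add₀ hq0, show (k : ℤ) + 1 + -((k : ℤ) + 1) = 0 by ring, zpow_zero]

lemma Ebar_0 {N : ℕ} (k : Fin (N + 1)) (r : Fin N) :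
    Ebar q s N (0, k) r = if (k : ℕ) = (r : ℕ) + 1 then Ebdiag s N r else 0 := rfl

lemma Ebar_1 {N : ℕ} (k : Fin (N + 1)) (r : Fin N) :
    Ebar q s N (1, k) r = if (k : ℕ) = (r : ℕ) then Eboff q s N r else 0 := by
  rw [Ebar]
  norm_num

lemma Fbar_0 {N : ℕ} (k : Fin (N + 1)) (r : Fin N) :
    Fbar q s N r (0, k) = if (k : ℕ) = (r : ℕ) + 1 then Fbdiag q s N r else 0 := rfl

lemma Fbar_1 {N : ℕ} (k : Fin (N + 1)) (r : Fin N) :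
    Fbar q s N r (1, k) = if (k : ℕ) = (r : ℕ) then Fboff q s N r else 0 := by
  rw [Fbar]
  norm_num

section
variable (hq0 : q ≠ 0) (hqru : ∀ n : ℕ, n ≠ 0 → q ^ n ≠ 1)
  (hs : ∀ a b : ℕ, s a b ^ 2 = qint q (a : ℤ) * qint q (b : ℤ))
  (hssym : ∀ a b : ℕ, s a b = s b a)
include hq0 hqru hs

lemma Hb_ne {N : ℕ} (r : Fin N) : Hbdiag q s N r ≠ 0 := by
  have hk : (r : ℕ) < N := r.isLt
  exact mul_ne_zero (pref_ne hq0 hqru N) (div_ne_zero (mul_ne_zero (hqq hq0 hqru)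
    (s_ne hq0 hqru hs (by omega) (by omega)))
    (mul_ne_zero (Eboff_ne hq0 hqru hs hk) (Fbdiag_ne hq0 hqru hs hk)))

include hssym in
lemma hv1 {N : ℕ} (r : Fin N) :
    Ebdiag s N r * (Hbdiag q s N r * Fbdiag q s N r)
      = (∏ k ∈ Finset.range (N - 1), (q ^ (-((k : ℤ) + 1)) - q ^ ((k : ℤ) + 1))) *
        (q ^ (-(((r : ℕ) : ℤ) + 1)) - q ^ (((r : ℕ) : ℤ) + 1)) := by
  have h := coreA hq0 hqru hs hssym r.isLt
  rw [Hbdiag]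
  linear_combination (∏ k ∈ Finset.range (N - 1),
    (q ^ (-((k : ℤ) + 1)) - q ^ ((k : ℤ) + 1))) * h

include hssym in
lemma hv2 {N : ℕ} (r : Fin N) :
    Ebdiag s N r * (Hbdiag q s N r * Fboff q s N r)
      = (∏ k ∈ Finset.range (N - 1), (q ^ (-((k : ℤ) + 1)) - q ^ ((k : ℤ) + 1))) *
        ((q - q⁻¹) * s (N - (r : ℕ)) ((r : ℕ) + 1)) := by
  have h := coreB hq0 hqru hs hssym r.isLt
  rw [Hbdiag]
  linear_combination (∏ k ∈ Finset.range (N - 1),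
    (q ^ (-((k : ℤ) + 1)) - q ^ ((k : ℤ) + 1))) * h

include hssym in
lemma hv3 {N : ℕ} (r : Fin N) :
    Eboff q s N r * (Hbdiag q s N r * Fbdiag q s N r)
      = (∏ k ∈ Finset.range (N - 1), (q ^ (-((k : ℤ) + 1)) - q ^ ((k : ℤ) + 1))) *
        ((q - q⁻¹) * s ((r : ℕ) + 1) (N - (r : ℕ))) := by
  have h := coreC hq0 hqru hs hssym r.isLt
  rw [Hbdiag]
  linear_combination (∏ k ∈ Finset.range (N - 1),
    (q ^ (-((k : ℤ) + 1)) - q ^ ((k : ℤ) + 1))) * h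

include hssym in
lemma hv4 {N : ℕ} (r : Fin N) :
    Eboff q s N r * (Hbdiag q s N r * Fboff q s N r)
      = (∏ k ∈ Finset.range (N - 1), (q ^ (-((k : ℤ) + 1)) - q ^ ((k : ℤ) + 1))) *
        (q ^ (((r : ℕ) : ℤ) - N) - q ^ ((N : ℤ) - ((r : ℕ) : ℤ))) := by
  have h := coreD hq0 hqru hs hssym r.isLt
  rw [Hbdiag]
  linear_combination (∏ k ∈ Finset.range (N - 1),
    (q ^ (-((k : ℤ) + 1)) - q ^ ((k : ℤ) + 1))) * h

include hssym in
lemma FE_one {N : ℕ} : Fbar q s N * Ebar q s N = (1 : Matrix (Fin N) (Fin N) ℂ) := by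
  ext r r'
  rw [Matrix.mul_apply, Fintype.sum_prod_type, Fin.sum_univ_two]
  have c0 : ∑ k : Fin (N + 1), Fbar q s N r (0, k) * Ebar q s N (0, k) r'
      = Fbdiag q s N r * Ebar q s N (0, ⟨(r : ℕ) + 1, by omega⟩) r' := by
    rw [← sum_collapse (fun k : Fin (N + 1) => Fbdiag q s N r * Ebar q s N (0, k) r')
      (show (r : ℕ) + 1 < N + 1 by omega)]
    refine Finset.sum_congr rfl fun k _ => ?_
    rw [Fbar_0, ite_mul, zero_mul]
  have c1 : ∑ k : Fin (N + 1), Fbar q s N r (1, k) * Ebar q s N (1, k) r'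
      = Fboff q s N r * Ebar q s N (1, ⟨(r : ℕ), by omega⟩) r' := by
    rw [← sum_collapse (fun k : Fin (N + 1) => Fboff q s N r * Ebar q s N (1, k) r')
      (show (r : ℕ) < N + 1 by omega)]
    refine Finset.sum_congr rfl fun k _ => ?_
    rw [Fbar_1, ite_mul, zero_mul]
  rw [c0, c1, Ebar_0, Ebar_1]
  simp only [Fin.val_mk]
  by_cases hrr : r = r'
  · subst hrr
    rw [if_pos rfl, if_pos rfl, Matrix.one_apply_eq]
    have hk : (r : ℕ) < N := r.isLt
    have hS := S_ne hq0 hqru (N := N) (k := (r : ℕ)) hk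
    have hE2 := Ebdiag_sq hq0 hqru hs hk
    have hO2 := Eboff_sq hq0 hqru hs hk
    rw [Fbdiag_eq hq0 hqru hs hk, Fboff_eq hq0 hqru hs hk]
    field_simp
    linear_combination hE2 + hO2
  · have h1 : ¬ ((r : ℕ) + 1 = (r' : ℕ) + 1) := fun h => hrr (Fin.ext (by omega))
    have h2 : ¬ ((r : ℕ) = (r' : ℕ)) := fun h => hrr (Fin.ext h)
    rw [if_neg h1, if_neg h2, Matrix.one_apply_ne hrr]
    ring

end
end S8
/-- For every `j ∈ {1/2, 1, 3/2, …}` (with `N = 2j`), the matrix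
`R^{(1/2,j)}(q^{-j-1/2})` has rank `2j` and factors as
`𝓔̄^{(j-1/2)} 𝓗̄^{(j-1/2)} 𝓕̄^{(j-1/2)}`. -/
theorem statement8 (q t : ℂ) (hq0 : q ≠ 0) (ht : t ^ 2 = q)
    (hqru : ∀ n : ℕ, n ≠ 0 → q ^ n ≠ 1)
    (s : ℕ → ℕ → ℂ) (hs : ∀ a b : ℕ, s a b ^ 2 = qint q (a : ℤ) * qint q (b : ℤ))
    (hssym : ∀ a b : ℕ, s a b = s b a)
    (N : ℕ) (hN : 1 ≤ N) :
    (Rhalf q t s N (t ^ (-((N : ℤ) + 1)))).rank = N ∧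
    Rhalf q t s N (t ^ (-((N : ℤ) + 1))) =
      Ebar q s N * Matrix.diagonal (Hbdiag q s N) * Fbar q s N := by
  have ht0 : t ≠ 0 := fun h => hq0 (by rw [← ht, h]; ring)
  have htq : ∀ m : ℤ, t ^ (2 * m) = q ^ m := by
    intro m
    rw [_root_.zpow_mul, show (2 : ℤ) = ((2 : ℕ) : ℤ) by norm_num, zpow_natCast, ht]
  set u := t ^ (-((N : ℤ) + 1)) with hu
  have hui0 : u⁻¹ = t ^ ((N : ℤ) + 1) := by rw [hu, ← _root_.zpow_neg, neg_neg]
  have huc : ∀ e m : ℤ, -((N : ℤ) + 1) + e = 2 * m → u * t ^ e = q ^ m := fun e m hm => by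
    rw [hu, ← zpow_add₀ ht0, hm, htq]
  have hui : ∀ e m : ℤ, ((N : ℤ) + 1) + e = 2 * m → u⁻¹ * t ^ e = q ^ m := fun e m hm => by
    rw [hui0, ← zpow_add₀ ht0, hm, htq]
  have hpref : (∏ k ∈ Finset.range (N - 1),
        (u * t ^ ((N : ℤ) - 1 - 2 * (k : ℤ)) - u⁻¹ * t ^ (-((N : ℤ) - 1 - 2 * (k : ℤ)))))
      = ∏ k ∈ Finset.range (N - 1), (q ^ (-((k : ℤ) + 1)) - q ^ ((k : ℤ) + 1)) :=
    Finset.prod_congr rfl fun k _ => by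
      rw [huc _ (-((k : ℤ) + 1)) (by ring), hui _ ((k : ℤ) + 1) (by ring)]
  have hmain : Rhalf q t s N u = Ebar q s N * Matrix.diagonal (Hbdiag q s N) * Fbar q s N := by
    rw [Matrix.mul_assoc]
    ext p p'
    obtain ⟨e, k⟩ := p
    obtain ⟨e', k'⟩ := p'
    rw [Matrix.mul_apply]
    simp only [Matrix.diagonal_mul]
    rw [Rhalf, Matrix.smul_apply, hpref, smul_eq_mul]
    simp only [Matrix.add_apply, Matrix.smul_apply, Matrix.kroneckerMap_apply, smul_eq_mul]
    fin_cases e <;> fin_cases e' <;> simp only [Fin.mk_zero, Fin.mk_one]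
    · -- e = 0, e' = 0
      simp only [S8.Ebar_0, S8.Fbar_0]
      rw [show sigp 0 0 = 0 by norm_num [sigp], show sigm 0 0 = 0 by norm_num [sigm]]
      rw [zero_mul, zero_mul, add_zero, mul_zero, zero_add]
      by_cases hkk : k = k'
      · subst hkk
        rw [Matrix.diagonal_apply_eq]
        have hR : Rexp N ((0 : Fin 2), k) = 1 + ((N : ℤ) - 2 * ((k : ℕ) : ℤ)) := by
          simp [Rexp]
        rw [hR, huc _ (-((k : ℕ) : ℤ)) (by ring), hui _ (((k : ℕ) : ℤ)) (by ring)]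
        rcases hk0 : (k : ℕ) with _ | m
        · rw [Finset.sum_eq_zero]
          · norm_num
          · intro r _
            rw [if_neg (by omega), zero_mul]
        · have hm : m < N := by
            have := k.isLt
            omega
          have hcol : (∑ r : Fin N, (if m + 1 = (r : ℕ) + 1 then Ebdiag s N (r : ℕ) else 0) *
                (Hbdiag q s N r * if m + 1 = (r : ℕ) + 1 then Fbdiag q s N (r : ℕ) else 0))
              = Ebdiag s N ((⟨m, hm⟩ : Fin N) : ℕ) *
                (Hbdiag q s N ⟨m, hm⟩ * Fbdiag q s N ((⟨m, hm⟩ : Fin N) : ℕ)) := by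
            rw [← S8.sum_collapse
              (fun r : Fin N => Ebdiag s N (r : ℕ) * (Hbdiag q s N r * Fbdiag q s N (r : ℕ))) hm]
            refine Finset.sum_congr rfl fun r _ => ?_
            by_cases h : (r : ℕ) = m
            · rw [if_pos (by omega), if_pos (by omega), h, if_pos rfl]
            · rw [if_neg (by omega), zero_mul, if_neg (by omega)]
          rw [hcol, S8.hv1 hq0 hqru hs hssym ⟨m, hm⟩]
          push_cast
          ring
      · rw [Matrix.diagonal_apply_ne _ (by simp [Prod.ext_iff, hkk]), mul_zero]
        symm
        refine Finset.sum_eq_zero fun r _ => ?_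
        by_cases h1 : (k : ℕ) = (r : ℕ) + 1
        · have h2 : ¬((k' : ℕ) = (r : ℕ) + 1) := fun h2 => hkk (Fin.ext (by omega))
          rw [if_neg h2, mul_zero, mul_zero]
        · rw [if_neg h1, zero_mul]
    · -- e = 0, e' = 1
      simp only [S8.Ebar_0, S8.Fbar_1]
      rw [show sigp 0 1 = 1 by norm_num [sigp], show sigm 0 1 = 0 by norm_num [sigm]]
      rw [Matrix.diagonal_apply_ne _ (by simp [Prod.ext_iff]), add_zero, one_mul, zero_mul,
        add_zero, piF]
      by_cases h : (k : ℕ) = (k' : ℕ) + 1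
      · have hm : (k' : ℕ) < N := by
          have := k.isLt
          omega
        have hcol : (∑ r : Fin N, (if (k : ℕ) = (r : ℕ) + 1 then Ebdiag s N (r : ℕ) else 0) *
              (Hbdiag q s N r * if (k' : ℕ) = (r : ℕ) then Fboff q s N (r : ℕ) else 0))
            = Ebdiag s N ((⟨(k' : ℕ), hm⟩ : Fin N) : ℕ) *
              (Hbdiag q s N ⟨(k' : ℕ), hm⟩ * Fboff q s N ((⟨(k' : ℕ), hm⟩ : Fin N) : ℕ)) := by
          rw [← S8.sum_collapse
            (fun r : Fin N => Ebdiag s N (r : ℕ) * (Hbdiag q s N r * Fboff q s N (r : ℕ))) hm]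
          refine Finset.sum_congr rfl fun r _ => ?_
          by_cases h2 : (r : ℕ) = (k' : ℕ)
          · rw [if_pos (by omega), if_pos (by omega), h2, if_pos rfl]
          · rw [if_neg (by omega), zero_mul, if_neg (by omega)]
        rw [hcol, S8.hv2 hq0 hqru hs hssym ⟨(k' : ℕ), hm⟩, if_pos h]
      · rw [if_neg h, mul_zero, mul_zero]
        symm
        refine Finset.sum_eq_zero fun r _ => ?_
        by_cases h1 : (k : ℕ) = (r : ℕ) + 1
        · have h2 : ¬((k' : ℕ) = (r : ℕ)) := fun h2 => h (by omega)
          rw [if_neg h2, mul_zero, mul_zero]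
        · rw [if_neg h1, zero_mul]
    · -- e = 1, e' = 0
      simp only [S8.Ebar_1, S8.Fbar_0]
      rw [show sigp 1 0 = 0 by norm_num [sigp], show sigm 1 0 = 1 by norm_num [sigm]]
      rw [Matrix.diagonal_apply_ne _ (by simp [Prod.ext_iff]), add_zero, one_mul, zero_mul,
        zero_add, piE]
      by_cases h : (k' : ℕ) = (k : ℕ) + 1
      · have hm : (k : ℕ) < N := by
          have := k'.isLt
          omega
        have hcol : (∑ r : Fin N, (if (k : ℕ) = (r : ℕ) then Eboff q s N (r : ℕ) else 0) *
              (Hbdiag q s N r * if (k' : ℕ) = (r : ℕ) + 1 then Fbdiag q s N (r : ℕ) else 0))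
            = Eboff q s N ((⟨(k : ℕ), hm⟩ : Fin N) : ℕ) *
              (Hbdiag q s N ⟨(k : ℕ), hm⟩ * Fbdiag q s N ((⟨(k : ℕ), hm⟩ : Fin N) : ℕ)) := by
          rw [← S8.sum_collapse
            (fun r : Fin N => Eboff q s N (r : ℕ) * (Hbdiag q s N r * Fbdiag q s N (r : ℕ))) hm]
          refine Finset.sum_congr rfl fun r _ => ?_
          by_cases h2 : (r : ℕ) = (k : ℕ)
          · rw [if_pos (by omega), if_pos (by omega), h2, if_pos rfl]
          · rw [if_neg (by omega), zero_mul, if_neg (by omega)]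
        rw [hcol, S8.hv3 hq0 hqru hs hssym ⟨(k : ℕ), hm⟩, if_pos h]
      · rw [if_neg h, mul_zero, mul_zero]
        symm
        refine Finset.sum_eq_zero fun r _ => ?_
        by_cases h1 : (k : ℕ) = (r : ℕ)
        · have h2 : ¬((k' : ℕ) = (r : ℕ) + 1) := fun h2 => h (by omega)
          rw [if_neg h2, mul_zero, mul_zero]
        · rw [if_neg h1, zero_mul]
    · -- e = 1, e' = 1
      simp only [S8.Ebar_1, S8.Fbar_1]
      rw [show sigp 1 1 = 0 by norm_num [sigp], show sigm 1 1 = 0 by norm_num [sigm]]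
      rw [zero_mul, zero_mul, add_zero, mul_zero, zero_add]
      by_cases hkk : k = k'
      · subst hkk
        rw [Matrix.diagonal_apply_eq]
        have hR : Rexp N ((1 : Fin 2), k) = 1 + (-1) * ((N : ℤ) - 2 * ((k : ℕ) : ℤ)) := by
          simp [Rexp]
        rw [hR, huc _ (((k : ℕ) : ℤ) - N) (by ring), hui _ ((N : ℤ) - ((k : ℕ) : ℤ)) (by ring)]
        by_cases hkN : (k : ℕ) = N
        · rw [Finset.sum_eq_zero, hkN]
          · norm_num
          · intro r _
            have := r.isLt
            rw [if_neg (by omega), zero_mul]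
        · have hm : (k : ℕ) < N := by
            have := k.isLt
            omega
          have hcol : (∑ r : Fin N, (if (k : ℕ) = (r : ℕ) then Eboff q s N (r : ℕ) else 0) *
                (Hbdiag q s N r * if (k : ℕ) = (r : ℕ) then Fboff q s N (r : ℕ) else 0))
              = Eboff q s N ((⟨(k : ℕ), hm⟩ : Fin N) : ℕ) *
                (Hbdiag q s N ⟨(k : ℕ), hm⟩ * Fboff q s N ((⟨(k : ℕ), hm⟩ : Fin N) : ℕ)) := by
            rw [← S8.sum_collapse
              (fun r : Fin N => Eboff q s N (r : ℕ) * (Hbdiag q s N r * Fboff q s N (r : ℕ))) hm]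
            refine Finset.sum_congr rfl fun r _ => ?_
            by_cases h2 : (r : ℕ) = (k : ℕ)
            · rw [if_pos (by omega), if_pos (by omega), h2, if_pos rfl]
            · rw [if_neg (by omega), zero_mul, if_neg (by omega)]
          rw [hcol, S8.hv4 hq0 hqru hs hssym ⟨(k : ℕ), hm⟩]
      · rw [Matrix.diagonal_apply_ne _ (by simp [Prod.ext_iff, hkk]), mul_zero]
        symm
        refine Finset.sum_eq_zero fun r _ => ?_
        by_cases h1 : (k : ℕ) = (r : ℕ)
        · have h2 : ¬((k' : ℕ) = (r : ℕ)) := fun h2 => hkk (Fin.ext (by omega))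
          rw [if_neg h2, mul_zero, mul_zero]
        · rw [if_neg h1, zero_mul]
  refine ⟨?_, hmain⟩
  classical
  have hEnt : ∀ r : Fin N, Hbdiag q s N r ≠ 0 := S8.Hb_ne hq0 hqru hs
  have hcard : Fintype.card {i : Fin N // Hbdiag q s N i ≠ 0} = N := by
    rw [Fintype.card_congr (Equiv.subtypeUnivEquiv hEnt)]
    exact Fintype.card_fin N
  have hdr : (Matrix.diagonal (Hbdiag q s N)).rank = N := by
    rw [Matrix.rank_diagonal, hcard]
  have hFE := S8.FE_one hq0 hqru hs hssym (N := N)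
  have hD : Matrix.diagonal (Hbdiag q s N) = Fbar q s N * (Rhalf q t s N u * Ebar q s N) := by
    rw [hmain, Matrix.mul_assoc (Ebar q s N * Matrix.diagonal (Hbdiag q s N)) (Fbar q s N)
      (Ebar q s N), hFE, Matrix.mul_one, ← Matrix.mul_assoc, hFE, Matrix.one_mul]
  have hle : (Rhalf q t s N u).rank ≤ N := by
    rw [hmain, Matrix.mul_assoc]
    refine le_trans (Matrix.rank_mul_le_right _ _) (le_trans (Matrix.rank_mul_le_right _ _) ?_)
    simpa using Matrix.rank_le_card_height (Fbar q s N)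
  have hge : N ≤ (Rhalf q t s N u).rank := by
    calc N = (Matrix.diagonal (Hbdiag q s N)).rank := hdr.symm
      _ = (Fbar q s N * (Rhalf q t s N u * Ebar q s N)).rank := by rw [← hD]
      _ ≤ (Rhalf q t s N u * Ebar q s N).rank := Matrix.rank_mul_le_right _ _
      _ ≤ (Rhalf q t s N u).rank := Matrix.rank_mul_le_left _ _
  omega
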